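/- Let x be a decision node and i a buyer with f_i(x) > 0 and κ_i(x) < t. Then p_i(x) ≤ v_{−i}(t − κ_i(x + e_i) | x), and equality holds only if μ̄_i(κ_i(x+e_i) + 1 | x) = μ_i(x). -/

import Mathlib

open Finset

noncomputable section

/-- The opponent of buyer `i`. -/
def other (i : Fin 2) : Fin 2 := 1 - i

/-- The standard unit vector of buyer `i`: winning one item moves `x` to `x + e i`. -/
def e (i : Fin 2) : Fin 2 → ℕ := Pi.single i 1

/-- Remaining supply `t(x) = T - x₁ - x₂` at node `x`. -/
def supply (T : ℕ) (x : Fin 2 → ℕ) : ℕ := T - (x 0 + x 1)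

/-- `x` is a decision node: `x₁ + x₂ < T`. -/
def IsDecision (T : ℕ) (x : Fin 2 → ℕ) : Prop := x 0 + x 1 < T

/-- Incremental value `v_i(k|x) = v_i(x_i + k)`. -/
def val (v : Fin 2 → ℕ → ℝ) (i : Fin 2) (k : ℕ) (x : Fin 2 → ℕ) : ℝ := v i (x i + k)

/-- Valuations are nonnegative and weakly decreasing. -/
def Admissible (v : Fin 2 → ℕ → ℝ) : Prop := ∀ i k, 0 ≤ v i k ∧ v i (k + 1) ≤ v i k

/-- Greedy payoff `μ̄_i(k|x) = Σ_{j=1}^k v_i(j|x) - k · v_{-i}(t-k+1|x)`. -/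
def gbar (T : ℕ) (v : Fin 2 → ℕ → ℝ) (i : Fin 2) (k : ℕ) (x : Fin 2 → ℕ) : ℝ :=
  (∑ j ∈ Finset.Icc 1 k, val v i j x) - (k : ℝ) * val v (other i) (supply T x - k + 1) x

/-- Greedy utility `μ_i(x) = max_{0 ≤ k ≤ t} μ̄_i(k|x)` (equal to `0` at terminal nodes). -/
def gu (T : ℕ) (v : Fin 2 → ℕ → ℝ) (i : Fin 2) (x : Fin 2 → ℕ) : ℝ :=
  Finset.sup' (Finset.range (supply T x + 1)) Finset.nonempty_range_add_one
    (fun k => gbar T v i k x)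

/-- Greedy demand `κ_i(x)`: the least `k ∈ {0,…,t}` attaining the greedy utility. -/
def gd (T : ℕ) (v : Fin 2 → ℕ → ℝ) (i : Fin 2) (x : Fin 2 → ℕ) : ℕ :=
  sInf {k | k ≤ supply T x ∧ gbar T v i k x = gu T v i x}

/-- Duopsony factor `f_i(x) = max ({k ∈ {1,…,t} : v_i(k|x) > v_{-i}(t-k+1|x)} ∪ {0})`. -/
def df (T : ℕ) (v : Fin 2 → ℕ → ℝ) (i : Fin 2) (x : Fin 2 → ℕ) : ℕ :=
  sSup {k | 1 ≤ k ∧ k ≤ supply T x ∧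
    val v (other i) (supply T x - k + 1) x < val v i k x}

/-- Baseline price `β_i(x)`. -/
def base (T : ℕ) (v : Fin 2 → ℕ → ℝ) (i : Fin 2) (x : Fin 2 → ℕ) : ℝ :=
  if df T v i x = 0 then val v i 1 x
  else val v (other i) (supply T x - gd T v i x + 1) x

/-- Threshold price `p_i(x) = v_i(1|x) + μ_i(x+e_i) - μ_i(x+e_{-i})`. -/
def tp (T : ℕ) (v : Fin 2 → ℕ → ℝ) (i : Fin 2) (x : Fin 2 → ℕ) : ℝ :=
  val v i 1 x + gu T v i (x + e i) - gu T v i (x + e (other i))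

lemma self_ne_other (i : Fin 2) : i ≠ other i := by fin_cases i <;> decide

lemma apply_e_self (x : Fin 2 → ℕ) (i : Fin 2) : (x + e i) i = x i + 1 := by
  simp [e]

lemma apply_e_other (x : Fin 2 → ℕ) (i j : Fin 2) (h : j ≠ i) : (x + e i) j = x j := by
  simp [e, Pi.single_apply, h]

lemma supply_e (T : ℕ) (x : Fin 2 → ℕ) (i : Fin 2) : supply T (x + e i) = supply T x - 1 := by
  fin_cases i <;> simp [supply, e, Pi.single_apply] <;> omega

lemma sum_shift (f : ℕ → ℝ) (k : ℕ) :
    f 1 + ∑ j ∈ Finset.Icc 1 k, f (j + 1) = ∑ j ∈ Finset.Icc 1 (k + 1), f j := by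
  induction k with
  | zero => simp
  | succ n ih =>
      rw [Finset.sum_Icc_succ_top (by omega : 1 ≤ n + 1),
        Finset.sum_Icc_succ_top (by omega : 1 ≤ n + 2), ← ih]
      ring

lemma gbar_eo (T : ℕ) (v : Fin 2 → ℕ → ℝ) (i : Fin 2) (x : Fin 2 → ℕ)
    (ht : 1 ≤ supply T x) (k : ℕ) (hk : k ≤ supply T x - 1) :
    gbar T v i k (x + e (other i)) = gbar T v i k x := by
  unfold gbar _root_.val
  rw [supply_e, apply_e_self, apply_e_other x (other i) i (self_ne_other i)]
  have : x (other i) + 1 + (supply T x - 1 - k + 1) = x (other i) + (supply T x - k + 1) := by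
    omega
  rw [this]

lemma gbar_ei (T : ℕ) (v : Fin 2 → ℕ → ℝ) (i : Fin 2) (x : Fin 2 → ℕ)
    (ht : 1 ≤ supply T x) (k : ℕ) (hk : k ≤ supply T x - 1) :
    val v i 1 x + gbar T v i k (x + e i)
      = gbar T v i (k + 1) x + val v (other i) (supply T x - k) x := by
  unfold gbar _root_.val
  rw [supply_e, apply_e_other x i (other i) (self_ne_other i).symm]
  have h1 : x (other i) + (supply T x - 1 - k + 1) = x (other i) + (supply T x - (k+1) + 1) := by
    omega
  have h2 : x (other i) + (supply T x - (k+1) + 1) = x (other i) + (supply T x - k) := by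
    omega
  have h3 : ∀ j ∈ Finset.Icc 1 k, v i ((x + e i) i + j) = v i (x i + (j + 1)) := by
    intro j _; rw [apply_e_self]; ring_nf
  rw [Finset.sum_congr rfl h3, h1, h2, ← sum_shift (fun m => v i (x i + m)) k]
  push_cast
  ring

lemma gd_mem (T : ℕ) (v : Fin 2 → ℕ → ℝ) (i : Fin 2) (x : Fin 2 → ℕ) :
    gd T v i x ≤ supply T x ∧ gbar T v i (gd T v i x) x = gu T v i x := by
  have hne : {k | k ≤ supply T x ∧ gbar T v i k x = gu T v i x}.Nonempty := by
    obtain ⟨b, hb, hbe⟩ := Finset.exists_mem_eq_sup' (Finset.nonempty_range_add_one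
      (n := supply T x)) (fun k => gbar T v i k x)
    exact ⟨b, by simpa using Nat.lt_succ_iff.mp (Finset.mem_range.mp hb), hbe.symm⟩
  exact Nat.sInf_mem hne

lemma gu_eo (T : ℕ) (v : Fin 2 → ℕ → ℝ) (i : Fin 2) (x : Fin 2 → ℕ)
    (ht : 1 ≤ supply T x) (hgd : gd T v i x < supply T x) :
    gu T v i (x + e (other i)) = gu T v i x := by
  apply le_antisymm
  · apply Finset.sup'_le
    intro k hk
    have hk' : k ≤ supply T x - 1 := by
      rw [supply_e] at hk; have := Finset.mem_range.mp hk; omega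
    rw [gbar_eo T v i x ht k hk']
    exact Finset.le_sup' (fun k => gbar T v i k x) (Finset.mem_range.mpr (by omega))
  · obtain ⟨h1, h2⟩ := gd_mem T v i x
    rw [← h2, ← gbar_eo T v i x ht _ (by omega)]
    exact Finset.le_sup' (fun k => gbar T v i k (x + e (other i)))
      (by rw [Finset.mem_range, supply_e]; omega)

theorem stmt9' (T : ℕ) (v : Fin 2 → ℕ → ℝ)
    (x : Fin 2 → ℕ) (hx : IsDecision T x) (i : Fin 2)
    (hk : gd T v i x < supply T x) :
    tp T v i x ≤ val v (other i) (supply T x - gd T v i (x + e i)) x ∧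
    (tp T v i x = val v (other i) (supply T x - gd T v i (x + e i)) x →
      gbar T v i (gd T v i (x + e i) + 1) x = gu T v i x) := by
  have ht : 1 ≤ supply T x := by unfold IsDecision at hx; unfold supply; omega
  obtain ⟨hκle, hκeq⟩ := gd_mem T v i (x + e i)
  set κ := gd T v i (x + e i) with hκ
  have hκt : κ ≤ supply T x - 1 := by rw [supply_e] at hκle; omega
  have heo : gu T v i (x + e (other i)) = gu T v i x := gu_eo T v i x ht hk
  have hid := gbar_ei T v i x ht κ hκt
  have htp : tp T v i x
      = gbar T v i (κ + 1) x + val v (other i) (supply T x - κ) x - gu T v i x := by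
    unfold tp
    rw [heo, ← hκeq]
    linarith
  have hle : gbar T v i (κ + 1) x ≤ gu T v i x :=
    Finset.le_sup' (fun k => gbar T v i k x) (Finset.mem_range.mpr (by omega))
  constructor
  · linarith
  · intro h; linarith

/-- The threshold price never exceeds the opponent's top remaining marginal value. -/
theorem stmt9 (T : ℕ) (v : Fin 2 → ℕ → ℝ) (hv : Admissible v)
    (x : Fin 2 → ℕ) (hx : IsDecision T x) (i : Fin 2)
    (hf : 0 < df T v i x) (hk : gd T v i x < supply T x) :
    tp T v i x ≤ val v (other i) (supply T x - gd T v i (x + e i)) x ∧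
    (tp T v i x = val v (other i) (supply T x - gd T v i (x + e i)) x →
      gbar T v i (gd T v i (x + e i) + 1) x = gu T v i x) := by
  exact stmt9' T v x hx i hk
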